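/- Let G be a Hausdorff topological group equipped with a partial order ≤ compatible with the group operation (a ≤ b and c ≤ d imply a + c ≤ b + d), and let T₁, …, Tₙ be subsets of the positive cone {g : 0 < g} each locally cofinite at 0. Then every g ∈ G has only finitely many representations as g = t₁ + ⋯ + tₙ with tᵢ ∈ Tᵢ; i.e., {(t₁,…,tₙ) ∈ T₁ × ⋯ × Tₙ : t₁ + ⋯ + tₙ = g} is finite. -/

import Mathlib

def LCF0 {G : Type*} [AddGroup G] [TopologicalSpace G] (T : Set G) : Prop :=
  (0 : G) ∉ T ∧ ∀ u : Set G, IsOpen u → (0 : G) ∈ u → (T \ u).Finite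

section aux

variable {G : Type*} [AddGroup G] [TopologicalSpace G] [PartialOrder G]

lemma lcf0_isCompact {T : Set G} (h : LCF0 T) :
    IsCompact (T ∪ {0}) := by
  classical
  refine isCompact_of_finite_subcover fun {ι} U hU hcov => ?_
  have h0 : (0 : G) ∈ T ∪ {0} := Or.inr rfl
  obtain ⟨i₀, hi₀⟩ := Set.mem_iUnion.1 (hcov h0)
  have hfin : (T \ U i₀).Finite := h.2 (U i₀) (hU i₀) hi₀
  have hch : ∀ x ∈ T \ U i₀, ∃ i, x ∈ U i := fun x hx =>
    Set.mem_iUnion.1 (hcov (Or.inl hx.1))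
  choose f hf using hch
  refine ⟨insert i₀ (hfin.toFinset.attach.image fun x =>
    f x.1 (hfin.mem_toFinset.1 x.2)), ?_⟩
  rintro x (hx | hx)
  · by_cases hxu : x ∈ U i₀
    · exact Set.mem_iUnion₂.2 ⟨i₀, Finset.mem_insert_self _ _, hxu⟩
    · refine Set.mem_iUnion₂.2 ⟨f x ⟨hx, hxu⟩, ?_, hf x ⟨hx, hxu⟩⟩
      exact Finset.mem_insert_of_mem (Finset.mem_image.2
        ⟨⟨x, hfin.mem_toFinset.2 ⟨hx, hxu⟩⟩, Finset.mem_attach _ _, rfl⟩)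
  · rcases hx with rfl
    exact Set.mem_iUnion₂.2 ⟨i₀, Finset.mem_insert_self _ _, hi₀⟩

lemma lcf0_isolated [T2Space G] {T : Set G} (h : LCF0 T) {t : G} (ht : t ∈ T) :
    ∃ v : Set G, IsOpen v ∧ t ∈ v ∧ v ∩ (T ∪ {0}) = {t} := by
  have htn : t ≠ 0 := fun h0 => h.1 (h0 ▸ ht)
  obtain ⟨v0, u, hv0, hu, htv0, h0u, hdisj⟩ := t2_separation htn
  have hfin : ((T \ u) \ {t} : Set G).Finite := (h.2 u hu h0u).subset Set.diff_subset
  refine ⟨v0 \ ((T \ u) \ {t}), hv0.sdiff hfin.isClosed, ⟨htv0, fun hx => hx.2 rfl⟩, ?_⟩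
  ext x
  constructor
  · rintro ⟨⟨hxv0, hxF⟩, hxT | hx0⟩
    · by_contra hne
      have hxu : x ∉ u := fun hxu => Set.disjoint_left.1 hdisj hxv0 hxu
      exact hxF ⟨⟨hxT, hxu⟩, hne⟩
    · rcases hx0 with rfl
      exact absurd h0u (Set.disjoint_left.1 hdisj hxv0)
  · rintro rfl
    exact ⟨⟨htv0, fun hx => hx.2 rfl⟩, Or.inl ht⟩

variable (hcompat : ∀ a b c d : G, a ≤ b → c ≤ d → a + c ≤ b + d)

include hcompat in
lemma ofFn_sum_le : ∀ {n : ℕ} (a b : Fin n → G), (∀ i, a i ≤ b i) →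
    (List.ofFn a).sum ≤ (List.ofFn b).sum := by
  intro n
  induction n with
  | zero => intro a b _; simp
  | succ m ih =>
    intro a b hle
    rw [List.ofFn_succ, List.ofFn_succ, List.sum_cons, List.sum_cons]
    exact hcompat _ _ _ _ (hle 0) (ih _ _ fun j => hle j.succ)

include hcompat in
lemma ofFn_sum_lt : ∀ {n : ℕ} (a b : Fin n → G), (∀ i, a i ≤ b i) →
    (∃ i, a i < b i) → (List.ofFn a).sum < (List.ofFn b).sum := by
  intro n
  induction n with
  | zero => rintro a b _ ⟨i, _⟩; exact absurd i.2 (by simp)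
  | succ m ih =>
    rintro a b hle ⟨i, hi⟩
    rw [List.ofFn_succ, List.ofFn_succ, List.sum_cons, List.sum_cons]
    have tle : (List.ofFn fun j : Fin m => a j.succ).sum ≤
        (List.ofFn fun j : Fin m => b j.succ).sum :=
      ofFn_sum_le hcompat _ _ fun j => hle j.succ
    rcases Fin.eq_zero_or_eq_succ i with rfl | ⟨j, rfl⟩
    · have h1 : a 0 + (List.ofFn fun j : Fin m => a j.succ).sum ≤
          a 0 + (List.ofFn fun j : Fin m => b j.succ).sum :=
        hcompat _ _ _ _ le_rfl tle
      have h2 : a 0 + (List.ofFn fun j : Fin m => b j.succ).sum <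
          b 0 + (List.ofFn fun j : Fin m => b j.succ).sum :=
        lt_of_le_of_ne (hcompat _ _ _ _ hi.le le_rfl)
          fun he => hi.ne (add_right_cancel he)
      exact h1.trans_lt h2
    · have tlt : (List.ofFn fun k : Fin m => a k.succ).sum <
          (List.ofFn fun k : Fin m => b k.succ).sum :=
        ih _ _ (fun k => hle k.succ) ⟨j, hi⟩
      have h1 : a 0 + (List.ofFn fun k : Fin m => a k.succ).sum <
          a 0 + (List.ofFn fun k : Fin m => b k.succ).sum :=
        lt_of_le_of_ne (hcompat _ _ _ _ le_rfl tlt.le)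
          fun he => tlt.ne (add_left_cancel he)
      exact h1.trans_le (hcompat _ _ _ _ (hle 0) le_rfl)

lemma continuous_ofFn_sum [IsTopologicalAddGroup G] :
    ∀ n : ℕ, Continuous fun t : Fin n → G => (List.ofFn t).sum := by
  intro n
  induction n with
  | zero => simpa using continuous_const
  | succ m ih =>
    have : (fun t : Fin (m + 1) → G => (List.ofFn t).sum) =
        fun t => t 0 + (List.ofFn fun j : Fin m => t j.succ).sum := by
      funext t; rw [List.ofFn_succ, List.sum_cons]
    rw [this]
    exact (continuous_apply 0).add (ih.comp (by continuity))

end aux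

theorem stmt_10 {G : Type*} [AddGroup G] [TopologicalSpace G] [IsTopologicalAddGroup G]
    [T2Space G] [PartialOrder G]
    (hcompat : ∀ a b c d : G, a ≤ b → c ≤ d → a + c ≤ b + d)
    (n : ℕ) (T : Fin n → Set G) (hT : ∀ i, LCF0 (T i))
    (hTpos : ∀ i, T i ⊆ {g : G | 0 < g}) (g : G) :
    {t : Fin n → G | (∀ i, t i ∈ T i) ∧ (List.ofFn t).sum = g}.Finite := by
  classical
  set R := {t : Fin n → G | (∀ i, t i ∈ T i) ∧ (List.ofFn t).sum = g} with hR
  by_contra hinf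
  rw [← Set.not_infinite, not_not] at hinf
  -- compact product
  have hK : IsCompact (Set.pi Set.univ fun i => T i ∪ {0}) :=
    isCompact_univ_pi fun i => lcf0_isCompact (hT i)
  have hsub : R ⊆ Set.pi Set.univ fun i => T i ∪ {0} := by
    intro t ht i _; exact Or.inl (ht.1 i)
  obtain ⟨ω, hωK, hacc⟩ := hinf.exists_accPt_of_subset_isCompact hK hsub
  rw [accPt_iff_nhds] at hacc
  -- ω is in closure of R, so its sum is g
  have hsum : (List.ofFn ω).sum = g := by
    have hcl : ω ∈ closure R := by
      rw [mem_closure_iff_nhds]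
      intro U hU
      obtain ⟨y, hy, _⟩ := hacc U hU
      exact ⟨y, hy⟩
    have hRcl : closure R ⊆ {t : Fin n → G | (List.ofFn t).sum = g} := by
      refine closure_minimal (fun t ht => ht.2) ?_
      exact (isClosed_singleton (x := g)).preimage (continuous_ofFn_sum n)
    exact hRcl hcl
  -- isolating neighborhoods for nonzero coordinates
  have hv : ∀ i : Fin n, ∃ v : Set G, v ∈ nhds (ω i) ∧
      (ω i ≠ 0 → v ∩ (T i ∪ {0}) = {ω i}) := by
    intro i
    by_cases h0 : ω i = 0
    · exact ⟨Set.univ, Filter.univ_mem, fun h => absurd h0 h⟩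
    · have hωT : ω i ∈ T i := by
        rcases hωK i (Set.mem_univ i) with h | h
        · exact h
        · exact absurd h h0
      obtain ⟨v, hvo, hωv, hiso⟩ := lcf0_isolated (hT i) hωT
      exact ⟨v, hvo.mem_nhds hωv, fun _ => hiso⟩
  choose v hvnhds hviso using hv
  have hVmem : Set.pi Set.univ v ∈ nhds ω :=
    set_pi_mem_nhds Set.finite_univ fun i _ => hvnhds i
  obtain ⟨t, ⟨htV, htR⟩, htne⟩ := hacc _ hVmem
  -- for nonzero coordinates, t i = ω i
  have hfix : ∀ i, ω i ≠ 0 → t i = ω i := by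
    intro i h0
    have : t i ∈ v i ∩ (T i ∪ {0}) := ⟨htV i (Set.mem_univ i), Or.inl (htR.1 i)⟩
    rw [hviso i h0] at this
    exact this
  have hle : ∀ i, ω i ≤ t i := by
    intro i
    by_cases h0 : ω i = 0
    · rw [h0]; exact (hTpos i (htR.1 i)).le
    · rw [hfix i h0]
  by_cases hall : ∀ i, ω i ≠ 0
  · exact htne (funext fun i => hfix i (hall i))
  · push_neg at hall
    obtain ⟨i, h0⟩ := hall
    have hlt : (List.ofFn ω).sum < (List.ofFn t).sum :=
      ofFn_sum_lt hcompat _ _ hle ⟨i, by rw [h0]; exact hTpos i (htR.1 i)⟩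
    rw [hsum, htR.2] at hlt
    exact lt_irrefl g hlt
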